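/- Assume c ≠ 0 and τ ≥ 0. Then λ = 0 is a root of the characteristic function P of multiplicity at least two (i.e., P(0) = 0 and P′(0) = 0) if and only if c²b₁b₂ = D and τ = (c²(b₁+b₂) − C)/(2c²b₁b₂). -/

import Mathlib

noncomputable section

/-- Coefficient A = b₁+b₂−2a -/
def cA (a b₁ b₂ : ℝ) : ℝ := b₁ + b₂ - 2*a
/-- Coefficient B = b₁b₂−2a(b₁+b₂)+a²+2 -/
def cB (a b₁ b₂ : ℝ) : ℝ := b₁*b₂ - 2*a*(b₁+b₂) + a^2 + 2
/-- Coefficient C = (a²+1)(b₁+b₂)−2ab₁b₂−2a -/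
def cC (a b₁ b₂ : ℝ) : ℝ := (a^2+1)*(b₁+b₂) - 2*a*b₁*b₂ - 2*a
/-- Coefficient D = a²b₁b₂−a(b₁+b₂)+1 -/
def cD (a b₁ b₂ : ℝ) : ℝ := a^2*b₁*b₂ - a*(b₁+b₂) + 1
/-- Coefficient E = c² -/
def cE (c : ℝ) : ℝ := c^2
/-- P̂ = A²−2B -/
def qP (a b₁ b₂ c : ℝ) : ℝ := (cA a b₁ b₂)^2 - 2*(cB a b₁ b₂)
/-- Q̂ = B²+2D−2AC−E² -/
def qQ (a b₁ b₂ c : ℝ) : ℝ :=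
  (cB a b₁ b₂)^2 + 2*(cD a b₁ b₂) - 2*(cA a b₁ b₂)*(cC a b₁ b₂) - (cE c)^2
/-- R̂ = C²−2BD−E²(b₁²+b₂²) -/
def qR (a b₁ b₂ c : ℝ) : ℝ :=
  (cC a b₁ b₂)^2 - 2*(cB a b₁ b₂)*(cD a b₁ b₂) - (cE c)^2*(b₁^2+b₂^2)
/-- Ŝ = D²−E²(b₁b₂)² -/
def qS (a b₁ b₂ c : ℝ) : ℝ := (cD a b₁ b₂)^2 - (cE c)^2*(b₁*b₂)^2
/-- Auxiliary quartic h(z) = z⁴+P̂z³+Q̂z²+R̂z+Ŝ -/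
def hq (a b₁ b₂ c z : ℝ) : ℝ :=
  z^4 + qP a b₁ b₂ c * z^3 + qQ a b₁ b₂ c * z^2 + qR a b₁ b₂ c * z + qS a b₁ b₂ c
/-- Derivative h′(z) = 4z³+3P̂z²+2Q̂z+R̂ -/
def hq' (a b₁ b₂ c z : ℝ) : ℝ :=
  4*z^3 + 3*qP a b₁ b₂ c * z^2 + 2*qQ a b₁ b₂ c * z + qR a b₁ b₂ c
/-- Characteristic function P(λ) = λ⁴+Aλ³+Bλ²+Cλ+D − E(λ+b₁)(λ+b₂)e^{−2λτ} -/
def charP (a b₁ b₂ c τ : ℝ) (z : ℂ) : ℂ :=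
  z^4 + (cA a b₁ b₂ : ℂ)*z^3 + (cB a b₁ b₂ : ℂ)*z^2 + (cC a b₁ b₂ : ℂ)*z + (cD a b₁ b₂ : ℂ)
    - (cE c : ℂ) * (z + (b₁:ℂ)) * (z + (b₂:ℂ)) * Complex.exp (-(2*z*(τ:ℂ)))

theorem stmt_13 (a b₁ b₂ c τ : ℝ) (ha : 0 < a) (hb₁ : 0 < b₁) (hb₂ : 0 < b₂)
    (hc : c ≠ 0) (hτ : 0 ≤ τ) :
    (charP a b₁ b₂ c τ 0 = 0 ∧ deriv (charP a b₁ b₂ c τ) 0 = 0) ↔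
      (c^2 * b₁ * b₂ = cD a b₁ b₂ ∧
        τ = (c^2 * (b₁+b₂) - cC a b₁ b₂) / (2 * c^2 * b₁ * b₂)) := by

  have hc2 : (0:ℝ) < c^2 := by positivity
  have hden : 2 * c^2 * b₁ * b₂ ≠ 0 := by positivity
  -- value at 0
  have hval : charP a b₁ b₂ c τ 0 = ((cD a b₁ b₂ - cE c * b₁ * b₂ : ℝ) : ℂ) := by
    simp [charP]
  -- derivative at 0
  have hexp0 : HasDerivAt (fun z : ℂ => -(2*z*(τ:ℂ))) (-(2*(τ:ℂ))) 0 := by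
    simpa using (((hasDerivAt_id (0:ℂ)).const_mul (2:ℂ)).mul_const (τ:ℂ)).fun_neg
  have hexp : HasDerivAt (fun z : ℂ => Complex.exp (-(2*z*(τ:ℂ))))
      (Complex.exp (-(2*(0:ℂ)*(τ:ℂ))) * (-(2*(τ:ℂ)))) 0 := hexp0.cexp
  have h2 : HasDerivAt (fun z : ℂ => (cE c : ℂ)*(z+(b₁:ℂ))) ((cE c : ℂ)) 0 := by
    simpa using ((hasDerivAt_id (0:ℂ)).add_const (b₁:ℂ)).const_mul ((cE c : ℂ))
  have h3 : HasDerivAt (fun z : ℂ => z+(b₂:ℂ)) 1 0 := (hasDerivAt_id (0:ℂ)).add_const _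
  have hmul := (h2.mul h3).mul hexp
  have hpoly : HasDerivAt (fun z : ℂ => z^4 + (cA a b₁ b₂ : ℂ)*z^3 + (cB a b₁ b₂ : ℂ)*z^2
      + (cC a b₁ b₂ : ℂ)*z + (cD a b₁ b₂ : ℂ))
      ((cC a b₁ b₂ : ℂ)) 0 := by
    have h4 : HasDerivAt (fun z : ℂ => z^4) (4*(0:ℂ)^3) 0 := hasDerivAt_pow 4 0
    have h5 : HasDerivAt (fun z : ℂ => (cA a b₁ b₂ : ℂ)*z^3)
        ((cA a b₁ b₂ : ℂ)*(3*(0:ℂ)^2)) 0 := (hasDerivAt_pow 3 0).const_mul _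
    have h6 : HasDerivAt (fun z : ℂ => (cB a b₁ b₂ : ℂ)*z^2)
        ((cB a b₁ b₂ : ℂ)*(2*(0:ℂ)^1)) 0 := (hasDerivAt_pow 2 0).const_mul _
    have h7 : HasDerivAt (fun z : ℂ => (cC a b₁ b₂ : ℂ)*z) ((cC a b₁ b₂ : ℂ)) 0 := by
      simpa using (hasDerivAt_id (0:ℂ)).const_mul ((cC a b₁ b₂ : ℂ))
    have := (((h4.add h5).add h6).add h7).add_const ((cD a b₁ b₂ : ℂ))
    refine this.congr_deriv ?_
    simp
  have hder : HasDerivAt (charP a b₁ b₂ c τ)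
      ((cC a b₁ b₂ - cE c * (b₁ + b₂) + 2 * cE c * τ * (b₁*b₂) : ℝ) : ℂ) 0 := by
    have heq : charP a b₁ b₂ c τ = fun z => (z^4 + (cA a b₁ b₂ : ℂ)*z^3
        + (cB a b₁ b₂ : ℂ)*z^2 + (cC a b₁ b₂ : ℂ)*z + (cD a b₁ b₂ : ℂ))
        - ((cE c : ℂ)*(z+(b₁:ℂ)) * (z+(b₂:ℂ)) * Complex.exp (-(2*z*(τ:ℂ)))) := by
      funext z; simp only [charP]
    rw [heq]
    refine (hpoly.sub hmul).congr_deriv ?_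
    rw [show -(2*(0:ℂ)*(τ:ℂ)) = 0 by ring, Complex.exp_zero]
    simp only [Pi.mul_apply]
    push_cast
    ring
  have hd0 : deriv (charP a b₁ b₂ c τ) 0
      = ((cC a b₁ b₂ - cE c * (b₁ + b₂) + 2 * cE c * τ * (b₁*b₂) : ℝ) : ℂ) := hder.deriv
  rw [hval, hd0]
  rw [show ((cD a b₁ b₂ - cE c * b₁ * b₂ : ℝ) : ℂ) = 0 ↔ (cD a b₁ b₂ - cE c * b₁ * b₂ : ℝ) = 0
    from by exact_mod_cast Complex.ofReal_eq_zero]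
  rw [show ((cC a b₁ b₂ - cE c * (b₁ + b₂) + 2 * cE c * τ * (b₁*b₂) : ℝ) : ℂ) = 0
      ↔ (cC a b₁ b₂ - cE c * (b₁ + b₂) + 2 * cE c * τ * (b₁*b₂) : ℝ) = 0
    from by exact_mod_cast Complex.ofReal_eq_zero]
  constructor
  · rintro ⟨e1, e2⟩
    have h1 : c^2 * b₁ * b₂ = cD a b₁ b₂ := by simp [cE] at e1; linarith
    refine ⟨h1, ?_⟩
    field_simp [cE] at e2 ⊢
    simp only [cE] at e2; linarith
  · rintro ⟨e1, e2⟩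
    have h1 : cD a b₁ b₂ - cE c * b₁ * b₂ = 0 := by simp [cE]; linarith
    refine ⟨h1, ?_⟩
    rw [e2]
    field_simp [cE]
    simp only [cE]; ring
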